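/- (Bias of the Blackman–Tukey estimator.) Let M ≤ N be positive integers, let w : ℤ → ℝ satisfy w[k] = w[−k] and w[k] ∈ [0, 1] for all k, let ε > 0, and let M̂ ∈ ℕ satisfy Σ_{|k| ≥ M̂} ‖R[k]‖₂ ≤ ε/2. If M ≥ M̂, N ≥ 2 M̂ ‖R‖₁ / ε, and w[k] ≥ (1 − ε/(2‖R‖₁)) / (1 − |k|/N) for all |k| < M̂, then sup_{s∈[−1/2,1/2]} ‖Φ(s) − Σ_{k=−M+1}^{M−1} e^{−j2πsk} (1 − |k|/N) w[k] R[k]‖₂ ≤ ε. -/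

import Mathlib

/-- The spectral norm (largest singular value): the operator norm of a matrix
acting between Euclidean spaces. -/
noncomputable def spec2 {𝕜 m n : Type*} [RCLike 𝕜] [Fintype m] [Fintype n] [DecidableEq n]
    (M : Matrix m n 𝕜) : ℝ :=
  letI := Matrix.instL2OpNormedAddCommGroup (𝕜 := 𝕜) (m := m) (n := n)
  ‖M‖

/-- The spectral density `Φ(s) = Σ_{k∈ℤ} e^{−j2πsk} R[k]`. -/
noncomputable def Phi {n : ℕ} (R : ℤ → Matrix (Fin n) (Fin n) ℝ) (s : ℝ) :
    Matrix (Fin n) (Fin n) ℂ :=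
  ∑' k : ℤ,
    Complex.exp (-(2 * (Real.pi : ℂ) * (s : ℂ) * (k : ℂ)) * Complex.I) • (R k).map (↑· : ℝ → ℂ)

open scoped Matrix.Norms.L2Operator in
lemma norm_map_ofReal_le {n : ℕ} (A : Matrix (Fin n) (Fin n) ℝ) :
    ‖A.map ((↑·) : ℝ → ℂ)‖ ≤ ‖A‖ := by
  rw [Matrix.l2_opNorm_def]
  refine ContinuousLinearMap.opNorm_le_bound _ (norm_nonneg _) fun x => ?_
  set xre : EuclideanSpace ℝ (Fin n) := (WithLp.equiv 2 _).symm fun i => (x i).re with hxre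
  set xim : EuclideanSpace ℝ (Fin n) := (WithLp.equiv 2 _).symm fun i => (x i).im with hxim
  have hx2 : ‖x‖ ^ 2 = ‖xre‖ ^ 2 + ‖xim‖ ^ 2 := by
    rw [EuclideanSpace.norm_eq, EuclideanSpace.norm_eq, EuclideanSpace.norm_eq,
      Real.sq_sqrt (by positivity), Real.sq_sqrt (by positivity), Real.sq_sqrt (by positivity),
      ← Finset.sum_add_distrib]
    refine Finset.sum_congr rfl fun i _ => ?_
    simp only [hxre, hxim, WithLp.equiv_symm_apply, PiLp.toLp_apply, Real.norm_eq_abs, sq_abs,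
      Complex.sq_norm, Complex.normSq_apply]
    ring
  have key : ‖(Matrix.toEuclideanLin (A.map ((↑·) : ℝ → ℂ))).toContinuousLinearMap x‖ ^ 2
      = ‖(WithLp.equiv 2 (Fin n → ℝ)).symm (A.mulVec (fun i => (x i).re))‖ ^ 2
        + ‖(WithLp.equiv 2 (Fin n → ℝ)).symm (A.mulVec (fun i => (x i).im))‖ ^ 2 := by
    rw [EuclideanSpace.norm_eq, EuclideanSpace.norm_eq, EuclideanSpace.norm_eq,
      Real.sq_sqrt (by positivity), Real.sq_sqrt (by positivity), Real.sq_sqrt (by positivity),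
      ← Finset.sum_add_distrib]
    refine Finset.sum_congr rfl fun i _ => ?_
    have h1 : (Matrix.toEuclideanLin (A.map ((↑·) : ℝ → ℂ))).toContinuousLinearMap x i
        = ∑ j, (A i j : ℂ) * x j := by
      simp [Matrix.toEuclideanLin_apply, Matrix.mulVec, dotProduct, Matrix.map_apply]
    rw [h1]
    simp only [WithLp.equiv_symm_apply, PiLp.toLp_apply, Real.norm_eq_abs, sq_abs,
      Complex.sq_norm, Complex.normSq_apply, Matrix.mulVec, dotProduct]
    rw [Complex.re_sum, Complex.im_sum]
    have hr : ∀ j, ((A i j : ℂ) * x j).re = A i j * (x j).re := fun j => by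
      simp [Complex.mul_re]
    have hi : ∀ j, ((A i j : ℂ) * x j).im = A i j * (x j).im := fun j => by
      simp [Complex.mul_im]
    simp_rw [hr, hi]
    ring
  have h2 := Matrix.l2_opNorm_mulVec A xre
  have h3 := Matrix.l2_opNorm_mulVec A xim
  have heq : (EuclideanSpace.equiv (Fin n) ℝ).symm (A.mulVec xre)
      = (WithLp.equiv 2 (Fin n → ℝ)).symm (A.mulVec (fun i => (x i).re)) := rfl
  have heq2 : (EuclideanSpace.equiv (Fin n) ℝ).symm (A.mulVec xim)
      = (WithLp.equiv 2 (Fin n → ℝ)).symm (A.mulVec (fun i => (x i).im)) := rfl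
  rw [heq] at h2; rw [heq2] at h3
  have hAx : ‖(Matrix.toEuclideanLin ≪≫ₗ LinearMap.toContinuousLinearMap) (A.map ((↑·) : ℝ → ℂ)) x‖ ^ 2
      ≤ (‖A‖ * ‖x‖) ^ 2 := by
    rw [show ((Matrix.toEuclideanLin ≪≫ₗ LinearMap.toContinuousLinearMap) (A.map ((↑·) : ℝ → ℂ)) x)
      = (Matrix.toEuclideanLin (A.map ((↑·) : ℝ → ℂ))).toContinuousLinearMap x from rfl, key]
    have e2 := pow_le_pow_left₀ (norm_nonneg _) h2 2
    have e3 := pow_le_pow_left₀ (norm_nonneg _) h3 2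
    calc _ ≤ (‖A‖ * ‖xre‖) ^ 2 + (‖A‖ * ‖xim‖) ^ 2 := add_le_add e2 e3
      _ = (‖A‖ * ‖x‖) ^ 2 := by rw [mul_pow, mul_pow, mul_pow, hx2]; ring
  have ha := norm_nonneg ((Matrix.toEuclideanLin ≪≫ₗ LinearMap.toContinuousLinearMap) (A.map ((↑·) : ℝ → ℂ)) x)
  have hb := mul_nonneg (norm_nonneg A) (norm_nonneg x)
  have h4 := Real.sqrt_le_sqrt hAx
  rwa [Real.sqrt_sq ha, Real.sqrt_sq hb] at h4

open scoped Matrix.Norms.L2Operator in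
theorem bias_blackman_tukey {n : ℕ} (hn : 1 ≤ n)
    (R : ℤ → Matrix (Fin n) (Fin n) ℝ)
    (hsum : Summable fun k : ℤ => spec2 (R k))
    (hRpos : 0 < ∑' k : ℤ, spec2 (R k))
    (M N : ℕ) (hM : 1 ≤ M) (hMN : M ≤ N)
    (w : ℤ → ℝ) (hwsymm : ∀ k : ℤ, w k = w (-k)) (hw01 : ∀ k : ℤ, w k ∈ Set.Icc (0:ℝ) 1)
    (ε : ℝ) (hε : 0 < ε) (Mhat : ℕ)
    (hMhat : ∑' k : {k : ℤ // Mhat ≤ k.natAbs}, spec2 (R k.val) ≤ ε / 2)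
    (hMMhat : M ≥ Mhat)
    (hNlarge : (N : ℝ) ≥ 2 * Mhat * (∑' k : ℤ, spec2 (R k)) / ε)
    (hwlarge : ∀ k : ℤ, k.natAbs < Mhat →
      w k ≥ (1 - ε / (2 * ∑' k : ℤ, spec2 (R k))) / (1 - (k.natAbs : ℝ) / N)) :
    ∀ s ∈ Set.Icc (-(1:ℝ)/2) (1/2),
      spec2 (Phi R s -
        ∑ k ∈ Finset.Icc (-(M : ℤ) + 1) ((M : ℤ) - 1),
          ((((1 - (k.natAbs : ℝ) / N) * w k : ℝ) : ℂ) *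
              Complex.exp (-(2 * (Real.pi : ℂ) * (s : ℂ) * (k : ℂ)) * Complex.I)) •
            (R k).map (↑· : ℝ → ℂ)) ≤ ε := by
  intro s _hs
  have hspec : ∀ (A : Matrix (Fin n) (Fin n) ℂ), spec2 A = ‖A‖ := fun _ => rfl
  have hspecR : ∀ (A : Matrix (Fin n) (Fin n) ℝ), spec2 A = ‖A‖ := fun _ => rfl
  set S := ∑' k : ℤ, spec2 (R k) with hS
  have hS0 : 0 < S := hRpos
  have hRn : ∀ k, (0:ℝ) ≤ spec2 (R k) := fun k => by rw [hspecR]; exact norm_nonneg _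
  set e : ℤ → ℂ := fun k =>
    Complex.exp (-(2 * (Real.pi : ℂ) * (s : ℂ) * (k : ℂ)) * Complex.I) with he
  have habs : ∀ k : ℤ, ‖e k‖ = 1 := by
    intro k
    rw [he]
    simp only [Complex.norm_exp]
    have h0 : ((-(2 * (Real.pi : ℂ) * (s : ℂ) * (k : ℂ))) * Complex.I).re = 0 := by
      simp [Complex.mul_re, Complex.mul_im]
    rw [h0, Real.exp_zero]
  have hmaple : ∀ k, ‖(R k).map ((↑·) : ℝ → ℂ)‖ ≤ spec2 (R k) := fun k => by
    rw [hspecR]; exact norm_map_ofReal_le (R k)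
  set F : Finset ℤ := Finset.Icc (-(M : ℤ) + 1) ((M : ℤ) - 1) with hF
  set c : ℤ → ℝ := fun k => (1 - (k.natAbs : ℝ) / N) * w k with hc
  set f : ℤ → Matrix (Fin n) (Fin n) ℂ := fun k => e k • (R k).map ((↑·) : ℝ → ℂ) with hf
  set g : ℤ → Matrix (Fin n) (Fin n) ℂ :=
    fun k => if k ∈ F then ((c k : ℂ) * e k) • (R k).map ((↑·) : ℝ → ℂ) else 0 with hg
  -- bounds on c
  have hN1 : (1:ℕ) ≤ N := le_trans hM hMN
  have hcmem : ∀ k ∈ F, 0 ≤ c k ∧ c k ≤ 1 := by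
    intro k hk
    rw [hF, Finset.mem_Icc] at hk
    have hkN : (k.natAbs : ℝ) / N ≤ 1 := by
      apply div_le_one_of_le₀
      · exact_mod_cast (by omega : k.natAbs ≤ N)
      · positivity
    have hkN0 : (0:ℝ) ≤ (k.natAbs : ℝ) / N := by positivity
    obtain ⟨hw0, hw1⟩ := hw01 k
    constructor
    · exact mul_nonneg (by linarith) hw0
    · calc (1 - (k.natAbs : ℝ) / N) * w k ≤ 1 * 1 := by
            apply mul_le_mul (by linarith) hw1 hw0 (by norm_num)
        _ = 1 := by norm_num
  have hclarge : ∀ k : ℤ, k.natAbs < Mhat → 1 - c k ≤ ε / (2 * S) := by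
    intro k hk
    have hNpos : (0:ℝ) < N := by exact_mod_cast hN1
    have hkN : (k.natAbs : ℝ) / N < 1 := by
      rw [div_lt_one hNpos]
      exact_mod_cast (by omega : k.natAbs < N)
    have hpos : (0:ℝ) < 1 - (k.natAbs : ℝ) / N := by linarith
    have := hwlarge k hk
    have h2 : c k ≥ 1 - ε / (2 * S) := by
      rw [hc]
      calc (1 - (k.natAbs : ℝ) / N) * w k
          ≥ (1 - (k.natAbs : ℝ) / N) * ((1 - ε / (2 * S)) / (1 - (k.natAbs : ℝ) / N)) := by
            apply mul_le_mul_of_nonneg_left this (le_of_lt hpos)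
        _ = 1 - ε / (2 * S) := by rw [mul_comm, div_mul_cancel₀ _ (ne_of_gt hpos)]
    linarith
  -- summability
  have hnf : ∀ k, ‖f k‖ ≤ spec2 (R k) := by
    intro k
    rw [hf]
    calc ‖e k • (R k).map ((↑·) : ℝ → ℂ)‖ = ‖e k‖ * ‖(R k).map ((↑·) : ℝ → ℂ)‖ := norm_smul _ _
      _ = ‖(R k).map ((↑·) : ℝ → ℂ)‖ := by rw [habs k, one_mul]
      _ ≤ spec2 (R k) := hmaple k
  have hfs : Summable f := Summable.of_norm_bounded hsum hnf
  have hgs : Summable g := summable_of_ne_finset_zero (s := F) (fun k hk => if_neg hk)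
  have hgsum : ∑' k, g k = ∑ k ∈ F,
      ((((1 - (k.natAbs : ℝ) / N) * w k : ℝ) : ℂ) * e k) • (R k).map ((↑·) : ℝ → ℂ) := by
    rw [tsum_eq_sum (s := F) (fun k hk => if_neg hk)]
    exact Finset.sum_congr rfl (fun k hk => if_pos hk)
  have hPhi : Phi R s = ∑' k, f k := rfl
  -- the bound function
  set b : ℤ → ℝ := fun k => (if k.natAbs < Mhat then ε / (2 * S) else 1) * spec2 (R k) with hb
  have hb0 : ∀ k, 0 ≤ b k := by
    intro k
    apply mul_nonneg _ (hRn k)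
    split <;> positivity
  have hble : ∀ k, b k ≤ max 1 (ε / (2 * S)) * spec2 (R k) := by
    intro k
    apply mul_le_mul_of_nonneg_right _ (hRn k)
    split
    · exact le_max_right _ _
    · exact le_max_left _ _
  have hbs : Summable b :=
    Summable.of_nonneg_of_le hb0 hble (hsum.mul_left _)
  -- per-term bound
  have hbound : ∀ k, ‖f k - g k‖ ≤ b k := by
    intro k
    by_cases hkF : k ∈ F
    · have hdiff : f k - g k = (((1 - c k : ℝ) : ℂ) * e k) • (R k).map ((↑·) : ℝ → ℂ) := by
        simp only [hf, hg, if_pos hkF]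
        rw [← sub_smul]
        congr 1
        push_cast
        ring
      rw [hdiff]
      have hcb := hcmem k hkF
      have h1 : ‖(((1 - c k : ℝ) : ℂ) * e k)‖ = 1 - c k := by
        rw [norm_mul, habs k, mul_one, Complex.norm_real, Real.norm_eq_abs,
          abs_of_nonneg (by linarith [hcb.2])]
      calc ‖(((1 - c k : ℝ) : ℂ) * e k) • (R k).map ((↑·) : ℝ → ℂ)‖
          = (1 - c k) * ‖(R k).map ((↑·) : ℝ → ℂ)‖ := by rw [norm_smul, h1]
        _ ≤ (1 - c k) * spec2 (R k) := by
            apply mul_le_mul_of_nonneg_left (hmaple k) (by linarith [hcb.2])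
        _ ≤ b k := by
            simp only [hb]
            apply mul_le_mul_of_nonneg_right _ (hRn k)
            split
            · next hlt => exact hclarge k hlt
            · linarith [hcb.1]
    · have hdiff : f k - g k = f k := by simp only [hg, if_neg hkF, sub_zero]
      have hkM : ¬ k.natAbs < Mhat := by
        intro hkm
        apply hkF
        rw [hF, Finset.mem_Icc]
        omega
      rw [hdiff]
      simp only [hb]
      rw [if_neg hkM, one_mul]
      exact hnf k
  -- conclude
  rw [hspec, ← hgsum]
  have heq2 : Phi R s - ∑' k, g k = ∑' k, (f k - g k) := by
    rw [hPhi, Summable.tsum_sub hfs hgs]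
  rw [heq2]
  have hmain : ‖∑' k, (f k - g k)‖ ≤ ∑' k, b k :=
    tsum_of_norm_bounded hbs.hasSum hbound
  refine le_trans hmain ?_
  -- split the sum
  set T : Set ℤ := {k : ℤ | Mhat ≤ k.natAbs} with hT
  have hsplit := Summable.tsum_subtype_add_tsum_subtype_compl hbs T
  have h1 : ∑' (k : T), b k ≤ ε / 2 := by
    have : ∀ (k : T), b k = spec2 (R k.val) := by
      intro k
      have hk2 : Mhat ≤ (k.val).natAbs := k.2
      simp only [hb]
      rw [if_neg (not_lt.2 hk2), one_mul]
    rw [tsum_congr this]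
    exact hMhat
  have h2 : ∑' (k : ↑Tᶜ), b k ≤ ε / 2 := by
    have hbk : ∀ (k : ↑Tᶜ), b k = ε / (2 * S) * spec2 (R k.val) := by
      intro k
      have hk2 : ¬ Mhat ≤ (k.val).natAbs := k.2
      simp only [hb]
      rw [if_pos (not_le.1 hk2)]
    rw [tsum_congr hbk, tsum_mul_left]
    have hle : ∑' (k : ↑Tᶜ), spec2 (R k.val) ≤ S :=
      Summable.tsum_subtype_le (fun k : ℤ => spec2 (R k)) _ hRn hsum
    calc ε / (2 * S) * ∑' (k : ↑Tᶜ), spec2 (R k.val) ≤ ε / (2 * S) * S := by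
          apply mul_le_mul_of_nonneg_left hle (by positivity)
      _ = ε / 2 := by field_simp
  linarith [hsplit.symm.le, hsplit.le]
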